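/- Let F : ℝ^d → ℝ be differentiable and β-smooth, μ-strongly convex with minimizer w*, and let η satisfy 0 < η ≤ 1/(2β). For a gradient step w⁺ = w - η·g where E[g] = ∇F(w) and E‖g - ∇F(w)‖² ≤ ς², we have E[F(w⁺)] - F(w*) ≤ (1 + 4μβη² - 2μη)·(F(w) - F(w*)) + 2βη²·ς². -/

import Mathlib

open MeasureTheory
open scoped RealInnerProductSpace

section helpers

variable {E : Type*} [NormedAddCommGroup E] [InnerProductSpace ℝ E] [CompleteSpace E]

lemma line_hasDerivAt (F : E → ℝ) (hdiff : Differentiable ℝ F) (x v : E) (t : ℝ) :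
    HasDerivAt (fun s : ℝ => F (x + s • v)) ⟪gradient F (x + t • v), v⟫ t := by
  have h1 : HasDerivAt (fun s : ℝ => x + s • v) v t := by
    simpa using ((hasDerivAt_id t).smul_const v).const_add x
  have h2 := (hdiff (x + t • v)).hasGradientAt
  rw [hasGradientAt_iff_hasFDerivAt] at h2
  have h3 := h2.comp_hasDerivAt t h1
  simpa [InnerProductSpace.toDual_apply_apply, Function.comp_def] using h3

lemma descent_lemma (F : E → ℝ) (β : ℝ)
    (hdiff : Differentiable ℝ F)
    (hsmooth : ∀ w₁ w₂, ‖gradient F w₁ - gradient F w₂‖ ≤ β * ‖w₁ - w₂‖)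
    (x v : E) :
    F (x + v) ≤ F x + ⟪gradient F x, v⟫ + β / 2 * ‖v‖ ^ 2 := by
  set χ : ℝ → ℝ := fun t =>
    F (x + t • v) - t * ⟪gradient F x, v⟫ - β / 2 * t ^ 2 * ‖v‖ ^ 2 with hχ
  have hd : ∀ t : ℝ, HasDerivAt χ
      (⟪gradient F (x + t • v), v⟫ - ⟪gradient F x, v⟫ - β * t * ‖v‖ ^ 2) t := by
    intro t
    have h1 := line_hasDerivAt F hdiff x v t
    have h2 : HasDerivAt (fun t : ℝ => t * ⟪gradient F x, v⟫) ⟪gradient F x, v⟫ t := by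
      simpa using (hasDerivAt_id t).mul_const ⟪gradient F x, v⟫
    have h3 : HasDerivAt (fun t : ℝ => β / 2 * t ^ 2 * ‖v‖ ^ 2) (β * t * ‖v‖ ^ 2) t := by
      have h := ((hasDerivAt_pow 2 t).const_mul (β / 2)).mul_const (‖v‖ ^ 2)
      convert h using 1
      · rfl
      · rfl
      ring
    exact (h1.sub h2).sub h3
  have hmono : AntitoneOn χ (Set.Icc (0:ℝ) 1) := by
    apply antitoneOn_of_deriv_nonpos (convex_Icc 0 1)
    · have hdc : Differentiable ℝ χ := fun t => (hd t).differentiableAt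
      exact hdc.continuous.continuousOn
    · exact (fun t _ => ((hd t).differentiableAt).differentiableWithinAt)
    · intro t ht
      rw [interior_Icc] at ht
      rw [(hd t).deriv]
      have hcs := real_inner_le_norm (gradient F (x + t • v) - gradient F x) v
      have hs := hsmooth (x + t • v) x
      have h1 : (x + t • v) - x = t • v := by abel
      rw [h1, norm_smul, Real.norm_eq_abs, abs_of_pos ht.1] at hs
      rw [inner_sub_left] at hcs
      nlinarith [norm_nonneg v, ht.1.le,
        mul_le_mul_of_nonneg_right hs (norm_nonneg v)]
  have h01 := hmono (Set.left_mem_Icc.2 zero_le_one) (Set.right_mem_Icc.2 zero_le_one)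
    zero_le_one
  simp only [hχ, zero_smul, add_zero, one_smul, zero_mul, mul_zero, zero_pow, one_pow,
    one_mul, sub_zero, mul_one] at h01
  linarith

lemma strong_lower (F : E → ℝ) (μ : ℝ) (hdiff : Differentiable ℝ F)
    (hconv : StrongConvexOn Set.univ μ F) (x y : E) :
    F x + ⟪gradient F x, y - x⟫ + μ / 2 * ‖y - x‖ ^ 2 ≤ F y := by
  set v := y - x with hv
  have hH : ConvexOn ℝ Set.univ (fun z : E => F z - μ / 2 * ‖z‖ ^ 2) :=
    strongConvexOn_iff_convex.mp hconv
  set φ : ℝ → ℝ := fun t => F (x + t • v) - μ / 2 * ‖x + t • v‖ ^ 2 with hφ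
  have hφconv : ConvexOn ℝ Set.univ φ := by
    have h := hH.comp_affineMap (AffineMap.lineMap x y : ℝ →ᵃ[ℝ] E)
    have heq : ((fun z : E => F z - μ / 2 * ‖z‖ ^ 2) ∘ (AffineMap.lineMap x y : ℝ →ᵃ[ℝ] E)) = φ := by
      funext t
      simp only [Function.comp, AffineMap.lineMap_apply_module', hφ, hv]
      rw [show x + t • (y - x) = t • (y - x) + x by abel]
    rw [heq] at h
    simpa using h
  have hnorm : ∀ t : ℝ, ‖x + t • v‖ ^ 2 = ‖x‖ ^ 2 + 2 * t * ⟪x, v⟫ + t ^ 2 * ‖v‖ ^ 2 := by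
    intro t
    rw [norm_add_sq_real, real_inner_smul_right, norm_smul, Real.norm_eq_abs, mul_pow, sq_abs]
    ring
  have hφd : HasDerivAt φ (⟪gradient F x, v⟫ - μ * ⟪x, v⟫) 0 := by
    have h1 := line_hasDerivAt F hdiff x v 0
    rw [zero_smul, add_zero] at h1
    have h2 : HasDerivAt (fun t : ℝ => μ / 2 * (‖x‖ ^ 2 + 2 * t * ⟪x, v⟫ + t ^ 2 * ‖v‖ ^ 2))
        (μ * ⟪x, v⟫) 0 := by
      have hA : HasDerivAt (fun t : ℝ => ‖x‖ ^ 2 + 2 * t * ⟪x, v⟫ + t ^ 2 * ‖v‖ ^ 2)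
          (2 * ⟪x, v⟫ + 2 * 0 ^ 1 * ‖v‖ ^ 2) 0 := by
        have hB : HasDerivAt (fun t : ℝ => 2 * t * ⟪x, v⟫) (2 * ⟪x, v⟫) 0 := by
          simpa [mul_comm, mul_assoc] using
            (((hasDerivAt_id (0:ℝ)).const_mul 2).mul_const ⟪x, v⟫)
        have hC : HasDerivAt (fun t : ℝ => t ^ 2 * ‖v‖ ^ 2) (2 * 0 ^ 1 * ‖v‖ ^ 2) 0 :=
          (hasDerivAt_pow 2 (0:ℝ)).mul_const (‖v‖ ^ 2)
        simpa [Pi.add_def] using (hB.const_add (‖x‖ ^ 2)).add hC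
      have := hA.const_mul (μ / 2)
      convert this using 1
      · rfl
      · rfl
      ring
    have hφeq : φ = fun t => F (x + t • v) - μ / 2 * (‖x‖ ^ 2 + 2 * t * ⟪x, v⟫ + t ^ 2 * ‖v‖ ^ 2) := by
      funext t; rw [hφ]; simp only [hnorm t]
    rw [hφeq]
    exact h1.sub h2
  have hslope := hφconv.le_slope_of_hasDerivAt (Set.mem_univ 0) (Set.mem_univ 1) zero_lt_one hφd
  rw [slope_def_field] at hslope
  have hφ1 : φ 1 = F y - μ / 2 * ‖y‖ ^ 2 := by
    simp only [hφ, one_smul, hv]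
    rw [show x + (y - x) = y by abel]
  have hφ0 : φ 0 = F x - μ / 2 * ‖x‖ ^ 2 := by simp [hφ]
  rw [hφ1, hφ0] at hslope
  have hid : ‖y - x‖ ^ 2 = ‖y‖ ^ 2 - 2 * ⟪y, x⟫ + ‖x‖ ^ 2 := norm_sub_sq_real y x
  have hid2 : ⟪x, v⟫ = ⟪y, x⟫ - ‖x‖ ^ 2 := by
    rw [hv, inner_sub_right, real_inner_self_eq_norm_sq, real_inner_comm]
  simp only [hv] at hslope hid2 ⊢
  have h1 : μ * ⟪x, y - x⟫ = μ * ⟪y, x⟫ - μ * ‖x‖ ^ 2 := by rw [hid2]; ring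
  have h2 : μ / 2 * ‖y - x‖ ^ 2 = μ / 2 * ‖y‖ ^ 2 - μ * ⟪y, x⟫ + μ / 2 * ‖x‖ ^ 2 := by
    rw [hid]; ring
  linarith

lemma pl_ineq (F : E → ℝ) (μ : ℝ) (hμ : 0 < μ) (hdiff : Differentiable ℝ F)
    (hconv : StrongConvexOn Set.univ μ F) (wstar w : E) :
    2 * μ * (F w - F wstar) ≤ ‖gradient F w‖ ^ 2 := by
  have h := strong_lower F μ hdiff hconv w wstar
  set G := gradient F w with hG
  set r := ‖wstar - w‖ with hr
  have hcs : -(‖G‖ * r) ≤ ⟪G, wstar - w⟫ := by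
    have h1 := abs_real_inner_le_norm G (wstar - w)
    have h2 := neg_abs_le (⟪G, wstar - w⟫)
    rw [← hr] at h1
    linarith
  have key : F w - F wstar ≤ ‖G‖ * r - μ / 2 * r ^ 2 := by nlinarith [h, hcs]
  have key2 := mul_le_mul_of_nonneg_left key (by positivity : (0:ℝ) ≤ 2 * μ)
  nlinarith [sq_nonneg (‖G‖ - μ * r), key2]

end helpers

theorem sgd_one_step_descent
    {d : ℕ} {Ω : Type*} [MeasureSpace Ω] (P : Measure Ω) [IsProbabilityMeasure P]
    (F : EuclideanSpace ℝ (Fin d) → ℝ)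
    (β μ η ς : ℝ) (hβ : 0 < β) (hμ : 0 < μ)
    (hη : 0 < η) (hη' : η ≤ 1 / (2 * β))
    (hdiff : Differentiable ℝ F)
    (hsmooth : ∀ w₁ w₂, ‖gradient F w₁ - gradient F w₂‖ ≤ β * ‖w₁ - w₂‖)
    (hconv : StrongConvexOn Set.univ μ F)
    (wstar : EuclideanSpace ℝ (Fin d)) (hmin : ∀ w, F wstar ≤ F w)
    (w : EuclideanSpace ℝ (Fin d))
    (g : Ω → EuclideanSpace ℝ (Fin d))
    (hg_int : Integrable g P)
    (hunbiased : ∫ ω, g ω ∂P = gradient F w)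
    (hvar_int : Integrable (fun ω => ‖g ω - gradient F w‖ ^ 2) P)
    (hvar : ∫ ω, ‖g ω - gradient F w‖ ^ 2 ∂P ≤ ς ^ 2)
    (hF_int : Integrable (fun ω => F (w - η • g ω)) P) :
    (∫ ω, F (w - η • g ω) ∂P) - F wstar
      ≤ (1 + 4 * μ * β * η ^ 2 - 2 * μ * η) * (F w - F wstar)
        + 2 * β * η ^ 2 * ς ^ 2 := by
  have hinner_int : Integrable (fun ω => ⟪gradient F w, g ω⟫) P :=
    hg_int.const_inner (gradient F w)
  have hsq_eq : (fun ω => ‖g ω‖ ^ 2)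
      = fun ω => ‖g ω - gradient F w‖ ^ 2 + (2 * ⟪gradient F w, g ω⟫ - ‖gradient F w‖ ^ 2) := by
    funext ω
    rw [norm_sub_sq_real, real_inner_comm]
    ring
  have hsq_int : Integrable (fun ω => ‖g ω‖ ^ 2) P := by
    rw [hsq_eq]
    exact hvar_int.add ((hinner_int.const_mul 2).sub (integrable_const _))
  have hpt : ∀ ω, F (w - η • g ω)
      ≤ F w - η * ⟪gradient F w, g ω⟫ + β / 2 * η ^ 2 * ‖g ω‖ ^ 2 := by
    intro ω
    have h := descent_lemma F β hdiff hsmooth w (-(η • g ω))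
    rw [show w + -(η • g ω) = w - η • g ω by abel] at h
    have e1 : ⟪gradient F w, -(η • g ω)⟫ = -(η * ⟪gradient F w, g ω⟫) := by
      rw [inner_neg_right, real_inner_smul_right]
    have e2 : ‖-(η • g ω)‖ ^ 2 = η ^ 2 * ‖g ω‖ ^ 2 := by
      rw [norm_neg, norm_smul, Real.norm_eq_abs, mul_pow, sq_abs]
    rw [e1, e2] at h
    linarith
  have hrhs_int : Integrable
      (fun ω => F w - η * ⟪gradient F w, g ω⟫ + β / 2 * η ^ 2 * ‖g ω‖ ^ 2) P :=
    ((integrable_const _).sub (hinner_int.const_mul η)).add (hsq_int.const_mul _)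
  have hI := integral_mono hF_int hrhs_int hpt
  have hinner_val : ∫ ω, ⟪gradient F w, g ω⟫ ∂P = ‖gradient F w‖ ^ 2 := by
    rw [integral_inner hg_int, hunbiased, real_inner_self_eq_norm_sq]
  have hsq_val : ∫ ω, ‖g ω‖ ^ 2 ∂P
      = (∫ ω, ‖g ω - gradient F w‖ ^ 2 ∂P) + ‖gradient F w‖ ^ 2 := by
    have e1 := integral_add hvar_int ((hinner_int.const_mul 2).sub
      (integrable_const (‖gradient F w‖ ^ 2)))
    have e2 := integral_sub (hinner_int.const_mul 2)
      (integrable_const (μ := P) (‖gradient F w‖ ^ 2))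
    have e3 := integral_const_mul (μ := P) 2 (fun ω => ⟪gradient F w, g ω⟫)
    simp only [Pi.sub_apply] at e1
    rw [hsq_eq, e1, e2, e3, hinner_val, integral_const]
    simp
    ring
  have hIval : ∫ ω, (F w - η * ⟪gradient F w, g ω⟫ + β / 2 * η ^ 2 * ‖g ω‖ ^ 2) ∂P
      = F w - η * ‖gradient F w‖ ^ 2
        + β / 2 * η ^ 2 * ((∫ ω, ‖g ω - gradient F w‖ ^ 2 ∂P) + ‖gradient F w‖ ^ 2) := by
    have e1 := integral_add ((integrable_const (μ := P) (F w)).sub (hinner_int.const_mul η))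
      (hsq_int.const_mul (β / 2 * η ^ 2))
    have e2 := integral_sub (integrable_const (μ := P) (F w)) (hinner_int.const_mul η)
    have e3 := integral_const_mul (μ := P) η (fun ω => ⟪gradient F w, g ω⟫)
    have e4 := integral_const_mul (μ := P) (β / 2 * η ^ 2) (fun ω => ‖g ω‖ ^ 2)
    simp only [Pi.sub_apply] at e1
    rw [e1, e2, e3, e4, hinner_val, hsq_val, integral_const]
    simp
  rw [hIval] at hI
  set S := ∫ ω, ‖g ω - gradient F w‖ ^ 2 ∂P with hSdef
  have hpl := pl_ineq F μ hμ hdiff hconv wstar w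
  have hA : 0 ≤ F w - F wstar := by linarith [hmin w]
  have hS0 : 0 ≤ S := integral_nonneg fun ω => sq_nonneg _
  have hβη : η * (2 * β) ≤ 1 := (le_div_iff₀ (by positivity)).mp hη'
  have h1 : 0 ≤ η * (1 - 2 * β * η) := mul_nonneg hη.le (by nlinarith)
  have h2 : 0 ≤ (η - 2 * β * η ^ 2) * (‖gradient F w‖ ^ 2 - 2 * μ * (F w - F wstar)) := by
    apply mul_nonneg (by nlinarith) (by linarith)
  have hbe : 0 ≤ β * η ^ 2 := by positivity
  nlinarith [hI, h2, mul_nonneg hbe (sq_nonneg ‖gradient F w‖),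
    mul_nonneg hbe (sub_nonneg.2 hvar), mul_nonneg hbe hS0]
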